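/- arXiv:2605.16773 — 2 statements merged into one kernel-verified Lean document; each statement's English description precedes it below -/
import Mathlib

section
/- With $a_k := (1-t^k)p_k/k$ (multiplication operator) and $b_n := (q^{-n}-1)\partial_{p_n}$, the two-variable generating function of commutators satisfies $[\exp(\sum_n b_n z^{-n}), \exp(\sum_m a_m w^m)] = \left(\frac{(1-t)(q^{-1}-1)(w/z)}{(1-t(w/z))(1-q^{-1}(w/z))}\right) \exp(\sum_m a_m w^m)\exp(\sum_n b_n z^{-n})$ as formal power series identities (expanding the prefactor in powers of $w/z$). -/
noncomputable section

variable {K : Type} [Field K] [CharZero K]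

/-- Coefficient of `z^n` in `exp f` for a power series `f` (over the bosonic polynomial ring
`K[p₁,p₂,…]`, modelled as `MvPolynomial ℕ K` with `X r ↔ p_r`) with zero constant term. -/
def expCoeffP (f : PowerSeries (MvPolynomial ℕ K)) (n : ℕ) : MvPolynomial ℕ K :=
  PowerSeries.coeff n (∑ k ∈ Finset.range (n + 1), ((k.factorial : K)⁻¹) • f ^ k)

/-- `c_k[p]`, defined by the generating function
`∑_{k≥0} c_k z^k = exp(∑_{r≥1} (1-t^r)/r · p_r z^r)`.
(The dual coefficients `c_k^∨` are `cPoly t⁻¹ k`.) -/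
def cPoly (t : K) (k : ℕ) : MvPolynomial ℕ K :=
  expCoeffP (PowerSeries.mk fun r =>
    if r = 0 then 0 else ((1 - t ^ r) / (r : K)) • MvPolynomial.X r) k

/-- `c_z` for `z ∈ ℤ`, with `c_z = 0` for `z < 0`. -/
def cPolyZ (t : K) (z : ℤ) : MvPolynomial ℕ K :=
  if 0 ≤ z then cPoly t z.toNat else 0

/-- The substitution `p_n ↦ p_n + b_n w^n`, which is how the normally ordered exponential
`exp(∑_{n≥1} b_n ∂_{p_n} z^{-n})` acts on polynomials in the `p`'s (with `w = z⁻¹`). -/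
def subShift (b : ℕ → K) (g : MvPolynomial ℕ K) : Polynomial (MvPolynomial ℕ K) :=
  MvPolynomial.aeval
    (fun n => Polynomial.C (MvPolynomial.X n) +
      Polynomial.C (MvPolynomial.C (b n)) * Polynomial.X ^ n) g

/-- The operator coefficient of `z^{-k}` in `exp(∑_{n≥1} b_n ∂_{p_n} z^{-n})`:
`ctOp b k g` is the coefficient of `w^k` in `g(p_n + b_n w^n)`. -/
def ctOp (b : ℕ → K) (k : ℕ) (g : MvPolynomial ℕ K) : MvPolynomial ℕ K :=
  (subShift b g).coeff k

/-- Parameters `b_n = q^{-n} - 1` giving `\widetilde{c}_k = ctOp (bq q) k`. -/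
def bq (q : K) : ℕ → K := fun n => q⁻¹ ^ n - 1

/-- Parameters `b_n = q^n - 1` giving `\widetilde{c}_k^∨ = ctOp (bqVee q) k`. -/
def bqVee (q : K) : ℕ → K := fun n => q ^ n - 1

/-- `[[n]]_{(t₁,t₂)} = ∑_{j=0}^{n-1} t₁^j t₂^{n-1-j}`. -/
def qtInt (t₁ t₂ : K) (n : ℕ) : K := ∑ j ∈ Finset.range n, t₁ ^ j * t₂ ^ (n - 1 - j)

end


noncomputable section
open PowerSeries Finset
set_option linter.unusedSectionVars false

variable {K : Type} [Field K] [CharZero K]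

def qtInt' (t₁ t₂ : K) (n : ℕ) : K := ∑ j ∈ Finset.range n, t₁ ^ j * t₂ ^ (n - 1 - j)

lemma qtInt'_zero (t u : K) : qtInt' t u 0 = 0 := by simp [qtInt']

lemma qtInt'_one (t u : K) : qtInt' t u 1 = 1 := by simp [qtInt']

lemma qtInt'_succ_u (t u : K) (j : ℕ) :
    qtInt' t u (j + 1) = u * qtInt' t u j + t ^ j := by
  rw [qtInt', Finset.sum_range_succ, qtInt', Finset.mul_sum]
  congr 1
  · apply Finset.sum_congr rfl
    intro i hi
    have hij : i < j := Finset.mem_range.mp hi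
    have : j + 1 - 1 - i = (j - 1 - i) + 1 := by omega
    rw [this, pow_succ]
    ring
  · simp

lemma qtInt'_succ_t (t u : K) (j : ℕ) :
    qtInt' t u (j + 1) = t * qtInt' t u j + u ^ j := by
  rw [qtInt', Finset.sum_range_succ', qtInt', Finset.mul_sum]
  congr 1
  · apply Finset.sum_congr rfl
    intro i hi
    rw [pow_succ]
    have : j + 1 - 1 - (i + 1) = j - 1 - i := by omega
    rw [this]
    ring
  · simp

/-- geometric series -/
def geoS (a : K) : K⟦X⟧ := PowerSeries.mk fun n => a ^ n

lemma geoS_mul (a : K) : (1 - PowerSeries.C a * X) * geoS a = 1 := by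
  ext n
  rw [sub_mul, one_mul, map_sub, mul_assoc]
  cases n with
  | zero => simp [geoS, PowerSeries.coeff_zero_eq_constantCoeff]
  | succ m =>
      rw [PowerSeries.coeff_C_mul, PowerSeries.coeff_succ_X_mul]
      simp [geoS, pow_succ, PowerSeries.coeff_one]
      ring

def FkF (t u : K) (j : ℕ) : K := if j = 0 then 1 else (1 - t) * (u - 1) * qtInt' t u j

def Pser (t u : K) : K⟦X⟧ := (1 - X) * (1 - PowerSeries.C (t * u) * X) * geoS t * geoS u

def Dser (t u : K) : K⟦X⟧ :=
  PowerSeries.C u * X * geoS u + PowerSeries.C t * X * geoS t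
    - X * geoS 1 - PowerSeries.C (t * u) * X * geoS (t * u)

lemma coeff_geo_geo (t u : K) (j : ℕ) :
    PowerSeries.coeff j (geoS t * geoS u) = qtInt' t u (j + 1) := by
  rw [PowerSeries.coeff_mul, Finset.Nat.sum_antidiagonal_eq_sum_range_succ_mk, qtInt']
  apply Finset.sum_congr rfl
  intro i hi
  simp [geoS]

lemma coeff_Pser (t u : K) (j : ℕ) :
    PowerSeries.coeff j (Pser t u) = FkF t u j := by
  have hP : Pser t u = geoS t * geoS u - X * (geoS t * geoS u)
      - PowerSeries.C (t * u) * (X * (geoS t * geoS u))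
      + PowerSeries.C (t * u) * (X * (X * (geoS t * geoS u))) := by rw [Pser]; ring
  match j with
  | 0 =>
      rw [hP]
      simp only [map_add, map_sub, PowerSeries.coeff_C_mul, PowerSeries.coeff_zero_X_mul,
        coeff_geo_geo, FkF, if_pos rfl]
      rw [qtInt'_one]
      simp
  | 1 =>
      rw [hP]
      simp only [map_add, map_sub, PowerSeries.coeff_C_mul, PowerSeries.coeff_succ_X_mul,
        PowerSeries.coeff_zero_X_mul, coeff_geo_geo, FkF]
      rw [if_neg one_ne_zero, qtInt'_succ_u, qtInt'_one]
      ring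
  | (m + 2) =>
      rw [hP]
      simp only [map_add, map_sub, PowerSeries.coeff_C_mul, PowerSeries.coeff_succ_X_mul,
        coeff_geo_geo, FkF]
      have h1 := qtInt'_succ_t t u (m + 2)
      have h2 := qtInt'_succ_t t u (m + 1)
      rw [if_neg (by omega : m + 2 ≠ 0)]
      simp only [show m + 1 + 1 = m + 2 from rfl, show m + 2 + 1 = m + 3 from rfl] at h1 h2 ⊢
      linear_combination h1 - u * h2

lemma coeff_Dser (t u : K) (j : ℕ) :
    PowerSeries.coeff j (Dser t u) =
      if j = 0 then 0 else (1 - t ^ j) * (u ^ j - 1) := by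
  match j with
  | 0 => simp [Dser, PowerSeries.coeff_zero_X_mul, PowerSeries.coeff_C_mul,
      mul_assoc, PowerSeries.coeff_zero_eq_constantCoeff]
  | (m + 1) =>
      simp only [Dser, map_add, map_sub, mul_assoc, PowerSeries.coeff_C_mul,
        PowerSeries.coeff_succ_X_mul, if_neg (Nat.succ_ne_zero m)]
      simp [geoS, mul_pow, pow_succ]
      ring

lemma deriv_geoS (a : K) : d⁄dX K (geoS a) = PowerSeries.C a * (geoS a * geoS a) := by
  have hm := geoS_mul a
  have h0 : d⁄dX K ((1 - PowerSeries.C a * X) * geoS a) = 0 := by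
    rw [geoS_mul]; exact Derivation.map_one_eq_zero _
  rw [Derivation.leibniz, smul_eq_mul, smul_eq_mul, map_sub] at h0
  simp only [Derivation.leibniz, smul_eq_mul, PowerSeries.derivative_X,
    PowerSeries.derivative_C, Derivation.map_one_eq_zero, mul_zero, mul_one, zero_sub,
    add_zero, zero_add] at h0
  linear_combination geoS a * h0 - d⁄dX K (geoS a) * hm

lemma X_mul_deriv_Pser (t u : K) :
    X * d⁄dX K (Pser t u) = Dser t u * Pser t u := by
  have hm1 : (1 - X) * geoS (1 : K) = 1 := by
    have := geoS_mul (1 : K); rwa [map_one, one_mul] at this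
  have hmtu := geoS_mul (t * u)
  have hd : d⁄dX K (Pser t u) =
      (-(1 - PowerSeries.C (t*u) * X) - PowerSeries.C (t*u) * (1 - X)) * geoS t * geoS u
      + (1 - X) * (1 - PowerSeries.C (t*u) * X) *
          (PowerSeries.C t * (geoS t * geoS t)) * geoS u
      + (1 - X) * (1 - PowerSeries.C (t*u) * X) * geoS t *
          (PowerSeries.C u * (geoS u * geoS u)) := by
    rw [Pser]
    rw [Derivation.leibniz, Derivation.leibniz, Derivation.leibniz]
    simp only [smul_eq_mul, deriv_geoS, map_sub, Derivation.leibniz, smul_eq_mul,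
      PowerSeries.derivative_X, PowerSeries.derivative_C, Derivation.map_one_eq_zero,
      mul_zero, mul_one, zero_sub, add_zero, zero_add]
    ring
  rw [hd, Dser, Pser]
  linear_combination (X * (1 - PowerSeries.C (t*u) * X) * geoS t * geoS u) * hm1
    + (PowerSeries.C (t*u) * X * (1 - X) * geoS t * geoS u) * hmtu

lemma scalar_id (t u : K) (j : ℕ) :
    (j : K) * FkF t u j
      = ∑ r ∈ Finset.Icc 1 j, (1 - t ^ r) * (u ^ r - 1) * FkF t u (j - r) := by
  match j with
  | 0 => simp
  | (m + 1) =>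
    have hx := congrArg (PowerSeries.coeff (m + 1)) (X_mul_deriv_Pser t u)
    rw [PowerSeries.coeff_succ_X_mul, PowerSeries.coeff_derivative, coeff_Pser,
      PowerSeries.coeff_mul, Finset.Nat.sum_antidiagonal_eq_sum_range_succ_mk,
      Finset.sum_range_succ'] at hx
    simp only [coeff_Dser, coeff_Pser, if_pos rfl, zero_mul, add_zero,
      if_neg (Nat.succ_ne_zero _)] at hx
    rw [← Finset.Ico_add_one_right_eq_Icc, Finset.sum_Ico_eq_sum_range]
    have hr : m + 1 + 1 - 1 = m + 1 := by omega
    rw [hr]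
    rw [if_pos trivial, zero_mul, add_zero] at hx
    have hs : ∑ i ∈ Finset.range (m + 1),
        (1 - t ^ (1 + i)) * (u ^ (1 + i) - 1) * FkF t u (m + 1 - (1 + i))
        = ∑ i ∈ Finset.range (m + 1),
        (1 - t ^ (i + 1)) * (u ^ (i + 1) - 1) * FkF t u (m + 1 - (i + 1)) := by
      apply Finset.sum_congr rfl
      intro i _
      rw [add_comm 1 i]
    rw [hs]
    rw [← hx]
    push_cast
    ring


section ExpPart

variable {A : Type} [CommRing A] [Algebra K A] [Algebra ℚ A]

lemma coeff_pow_eq_zero' {f : PowerSeries A} (hf : PowerSeries.constantCoeff f = 0) :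
    ∀ {k n : ℕ}, n < k → PowerSeries.coeff n (f ^ k) = 0 := by
  intro k
  induction k with
  | zero => intro n h; omega
  | succ k ih =>
      intro n h
      rw [pow_succ', PowerSeries.coeff_mul]
      apply Finset.sum_eq_zero
      intro x hx
      have hx' : x.1 + x.2 = n := Finset.HasAntidiagonal.mem_antidiagonal.mp hx
      rcases Nat.eq_zero_or_pos x.1 with h0 | h0
      · rw [h0, PowerSeries.coeff_zero_eq_constantCoeff, hf, zero_mul]
      · rw [ih (by omega), mul_zero]

end ExpPart

section ExpPart2

def expPS (f : PowerSeries (MvPolynomial ℕ K)) : PowerSeries (MvPolynomial ℕ K) :=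
  PowerSeries.mk fun n =>
    PowerSeries.coeff n (∑ k ∈ Finset.range (n + 1), ((k.factorial : K)⁻¹) • f ^ k)

lemma coeff_expPS {f : PowerSeries (MvPolynomial ℕ K)}
    (hf : PowerSeries.constantCoeff f = 0) {n m : ℕ} (h : n < m) :
    PowerSeries.coeff n (expPS f)
      = ∑ k ∈ Finset.range m, ((k.factorial : K)⁻¹) • PowerSeries.coeff n (f ^ k) := by
  rw [expPS, PowerSeries.coeff_mk, map_sum]
  simp only [PowerSeries.coeff_smul]
  apply Finset.sum_subset
  · intro x hx
    simp only [Finset.mem_range] at hx ⊢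
    omega
  · intro x _ hx
    simp only [Finset.mem_range] at hx
    rw [coeff_pow_eq_zero' hf (by omega), smul_zero]

lemma deriv_expPS {f : PowerSeries (MvPolynomial ℕ K)}
    (hf : PowerSeries.constantCoeff f = 0) :
    d⁄dX (MvPolynomial ℕ K) (expPS f) = d⁄dX (MvPolynomial ℕ K) f * expPS f := by
  apply PowerSeries.ext
  intro n
  rw [PowerSeries.coeff_derivative, coeff_expPS hf (by omega : n + 1 < n + 2),
    Finset.sum_mul, Finset.sum_range_succ']
  have hg0 : ((Nat.factorial 0 : K)⁻¹ • PowerSeries.coeff (n + 1) (f ^ 0)) * ((n : MvPolynomial ℕ K) + 1) = 0 := by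
    rw [pow_zero, PowerSeries.coeff_one, if_neg (Nat.succ_ne_zero n)]
    simp
  rw [hg0, add_zero]
  have hL : ∀ k : ℕ, ((Nat.factorial (k+1) : K)⁻¹ • PowerSeries.coeff (n + 1) (f ^ (k+1)))
      * ((n : MvPolynomial ℕ K) + 1)
      = (Nat.factorial k : K)⁻¹ • PowerSeries.coeff n (d⁄dX (MvPolynomial ℕ K) f * f ^ k) := by
    intro k
    rw [smul_mul_assoc]
    have hd : PowerSeries.coeff (n+1) (f ^ (k+1)) * ((n : MvPolynomial ℕ K) + 1)
        = PowerSeries.coeff n (d⁄dX (MvPolynomial ℕ K) (f ^ (k+1))) := by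
      rw [PowerSeries.coeff_derivative]
    rw [hd, Derivation.leibniz_pow]
    rw [Nat.add_sub_cancel, smul_eq_mul]
    rw [map_nsmul]
    rw [← Nat.cast_smul_eq_nsmul K]
    rw [smul_smul]
    have hsc : (Nat.factorial (k+1) : K)⁻¹ * ((k : K) + 1) = (Nat.factorial k : K)⁻¹ := by
      have h1 : ((k : K) + 1) ≠ 0 := by
        have : ((k+1 : ℕ) : K) ≠ 0 := Nat.cast_ne_zero.mpr (Nat.succ_ne_zero k)
        push_cast at this; exact this
      rw [Nat.factorial_succ]
      push_cast
      rw [mul_inv, mul_comm, ← mul_assoc, mul_inv_cancel₀ h1, one_mul]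
    push_cast
    rw [hsc]
    congr 1
    rw [mul_comm]
  calc ∑ k ∈ Finset.range (n+1),
        ((Nat.factorial (k+1) : K)⁻¹ • PowerSeries.coeff (n + 1) (f ^ (k+1)))
          * ((n : MvPolynomial ℕ K) + 1)
      = ∑ k ∈ Finset.range (n+1),
          (Nat.factorial k : K)⁻¹ • PowerSeries.coeff n (d⁄dX (MvPolynomial ℕ K) f * f ^ k) := by
        exact Finset.sum_congr rfl fun k _ => hL k
    _ = PowerSeries.coeff n (d⁄dX (MvPolynomial ℕ K) f * expPS f) := by
        rw [PowerSeries.coeff_mul]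
        simp only [PowerSeries.coeff_mul, Finset.smul_sum]
        rw [Finset.sum_comm]
        apply Finset.sum_congr rfl
        intro x hx
        have hb : x.2 < n + 1 := by
          have := Finset.HasAntidiagonal.mem_antidiagonal.mp hx; omega
        rw [coeff_expPS hf hb, Finset.mul_sum]
        apply Finset.sum_congr rfl
        intro k _
        rw [mul_smul_comm]

end ExpPart2


def fserT (t : K) : PowerSeries (MvPolynomial ℕ K) :=
  PowerSeries.mk fun r => if r = 0 then 0 else ((1 - t ^ r) / (r : K)) • MvPolynomial.X r

lemma coeff_fserT (t : K) (r : ℕ) : PowerSeries.coeff r (fserT t)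
    = if r = 0 then 0 else ((1 - t ^ r) / (r : K)) • MvPolynomial.X r := by
  rw [fserT, PowerSeries.coeff_mk]

lemma fserT_const (t : K) : PowerSeries.constantCoeff (fserT t) = 0 := by
  rw [← PowerSeries.coeff_zero_eq_constantCoeff, coeff_fserT, if_pos rfl]

def cPoly' (t : K) (ℓ : ℕ) : MvPolynomial ℕ K := PowerSeries.coeff ℓ (expPS (fserT t))

lemma cPoly'_def (t : K) (ℓ : ℕ) :
    cPoly' t ℓ = PowerSeries.coeff ℓ (expPS (fserT t)) := rfl

lemma cPoly'_zero (t : K) : cPoly' t 0 = 1 := by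
  rw [cPoly', coeff_expPS (fserT_const t) (by omega : 0 < 1)]
  simp

lemma natCast_C (i : ℕ) : ((i : MvPolynomial ℕ K) + 1) = MvPolynomial.C ((i : K) + 1) := by
  have := (map_natCast (MvPolynomial.C : K →+* MvPolynomial ℕ K) (i + 1)).symm
  push_cast at this ⊢
  exact this

lemma newton (t : K) (n : ℕ) :
    (n : K) • cPoly' t n
      = ∑ r ∈ Finset.Icc 1 n, (1 - t ^ r) • (MvPolynomial.X r * cPoly' t (n - r)) := by
  match n with
  | 0 => simp
  | (m + 1) =>
    have hx := congrArg (PowerSeries.coeff m) (deriv_expPS (fserT_const t))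
    rw [PowerSeries.coeff_derivative, PowerSeries.coeff_mul,
      Finset.Nat.sum_antidiagonal_eq_sum_range_succ_mk] at hx
    have hterm : ∀ i ∈ Finset.range (m + 1),
        PowerSeries.coeff i (d⁄dX (MvPolynomial ℕ K) (fserT t)) *
            PowerSeries.coeff (m - i) (expPS (fserT t))
          = (1 - t ^ (i + 1)) • (MvPolynomial.X (i + 1) * cPoly' t (m - i)) := by
      intro i _
      rw [PowerSeries.coeff_derivative, coeff_fserT, if_neg (Nat.succ_ne_zero i),
        ← cPoly'_def, smul_mul_assoc, smul_mul_assoc]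
      have key : MvPolynomial.X (i + 1) * ((i : MvPolynomial ℕ K) + 1) * cPoly' t (m - i)
          = ((i : K) + 1) • (MvPolynomial.X (i + 1) * cPoly' t (m - i)) := by
        rw [natCast_C, MvPolynomial.smul_eq_C_mul]; ring
      have hne : ((i : K) + 1) ≠ 0 := by
        have : ((i + 1 : ℕ) : K) ≠ 0 := Nat.cast_ne_zero.mpr (Nat.succ_ne_zero i)
        push_cast at this; exact this
      rw [key, smul_smul]
      congr 1
      push_cast
      exact div_mul_cancel₀ _ hne
    rw [Finset.sum_congr rfl hterm] at hx
    rw [← Finset.Ico_add_one_right_eq_Icc, Finset.sum_Ico_eq_sum_range]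
    have h2 : m + 1 + 1 - 1 = m + 1 := by omega
    rw [h2]
    have h3 : ∀ i ∈ Finset.range (m + 1),
        (1 - t ^ (1 + i)) • (MvPolynomial.X (1 + i) * cPoly' t (m + 1 - (1 + i)))
          = (1 - t ^ (i + 1)) • (MvPolynomial.X (i + 1) * cPoly' t (m - i)) := by
      intro i _
      have e2 : m + 1 - (1 + i) = m - i := by omega
      rw [e2, add_comm 1 i]
    rw [Finset.sum_congr rfl h3, ← hx, ← cPoly'_def, natCast_C, mul_comm,
      ← MvPolynomial.smul_eq_C_mul]
    push_cast
    rfl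


def shiftHom (b : ℕ → K) : MvPolynomial ℕ K →ₐ[K] Polynomial (MvPolynomial ℕ K) :=
  MvPolynomial.aeval (fun n => Polynomial.C (MvPolynomial.X n) +
      Polynomial.C (MvPolynomial.C (b n)) * Polynomial.X ^ n)

lemma shiftHom_X (b : ℕ → K) (n : ℕ) : shiftHom b (MvPolynomial.X n)
    = Polynomial.C (MvPolynomial.X n) + Polynomial.C (MvPolynomial.C (b n)) * Polynomial.X ^ n :=
  MvPolynomial.aeval_X _ n

lemma coeff_shift_term (a : MvPolynomial ℕ K) (c : K) (r j : ℕ)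
    (S : Polynomial (MvPolynomial ℕ K)) :
    ((Polynomial.C a + Polynomial.C (MvPolynomial.C c) * Polynomial.X ^ r) * S).coeff j
      = a * S.coeff j + MvPolynomial.C c * (if r ≤ j then S.coeff (j - r) else 0) := by
  rw [add_mul, Polynomial.coeff_add, Polynomial.coeff_C_mul, mul_assoc, Polynomial.coeff_C_mul,
    mul_comm (Polynomial.X ^ r) S, Polynomial.coeff_mul_X_pow']

lemma KL (u t : K) (ℓ : ℕ) : ∀ j : ℕ,
    (shiftHom (fun n => u ^ n - 1) (cPoly' t ℓ)).coeff j
      = if j ≤ ℓ then MvPolynomial.C (FkF t u j) * cPoly' t (ℓ - j) else 0 := by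
  induction ℓ using Nat.strong_induction_on with
  | _ ℓ IH =>
    match ℓ with
    | 0 =>
        intro j
        rw [cPoly'_zero, map_one, Polynomial.coeff_one]
        match j with
        | 0 => simp [FkF, cPoly'_zero]
        | (i + 1) => simp
    | (m + 1) =>
      intro j
      set N := m + 1 with hN
      set b : ℕ → K := fun n => u ^ n - 1 with hb
      have hmap := congrArg (fun p => Polynomial.coeff (shiftHom b p) j) (newton t N)
      simp only [map_smul, map_sum, map_mul, shiftHom_X,
        Polynomial.coeff_smul, Polynomial.finset_sum_coeff] at hmap
      rw [Finset.sum_congr rfl (fun r _ => congrArg (fun z => (1 - t ^ r) • z)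
        (coeff_shift_term (MvPolynomial.X r) (b r) r j
          (shiftHom b (cPoly' t (N - r)))))] at hmap
      have hIH : ∀ r ∈ Finset.Icc 1 N, ∀ i : ℕ, (shiftHom b (cPoly' t (N - r))).coeff i
          = if i ≤ N - r then MvPolynomial.C (FkF t u i) * cPoly' t (N - r - i) else 0 := by
        intro r hr i
        have hrr : N - r < N := by
          have := (Finset.mem_Icc.mp hr).1; omega
        exact IH (N - r) hrr i
      rw [Finset.sum_congr rfl (fun r hr => by
        rw [hIH r hr j, hIH r hr (j - r)])] at hmap
      -- now hmap : (N:K) • (shiftHom b (cPoly' t N)).coeff j = big sum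
      have hNne : ((N : ℕ) : K) ≠ 0 := Nat.cast_ne_zero.mpr (by omega)
      have goal2 : ((N : ℕ) : K) • (shiftHom b (cPoly' t N)).coeff j
          = ((N : ℕ) : K) • (if j ≤ N then MvPolynomial.C (FkF t u j) * cPoly' t (N - j) else 0) := by
        rw [hmap]
        by_cases hjN : j ≤ N
        · rw [if_pos hjN]
          have hsplit : ∀ r ∈ Finset.Icc 1 N,
              (1 - t ^ r) • (MvPolynomial.X r *
                  (if j ≤ N - r then MvPolynomial.C (FkF t u j) * cPoly' t (N - r - j) else 0)
                + MvPolynomial.C (b r) * (if r ≤ j then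
                    (if j - r ≤ N - r then MvPolynomial.C (FkF t u (j - r)) * cPoly' t (N - r - (j - r)) else 0)
                  else 0))
              = (if r ≤ N - j then
                    MvPolynomial.C (FkF t u j) * ((1 - t ^ r) • (MvPolynomial.X r * cPoly' t (N - j - r)))
                  else 0)
                + (if r ≤ j then ((1 - t ^ r) * (u ^ r - 1) * FkF t u (j - r)) • cPoly' t (N - j) else 0) := by
            intro r hr
            obtain ⟨hr1, hr2⟩ := Finset.mem_Icc.mp hr
            rw [smul_add]
            congr 1
            · by_cases h : j ≤ N - r
              · rw [if_pos h, if_pos (by omega : r ≤ N - j)]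
                have : N - r - j = N - j - r := by omega
                rw [this, MvPolynomial.smul_eq_C_mul, MvPolynomial.smul_eq_C_mul]
                ring
              · rw [if_neg h, if_neg (by omega : ¬ r ≤ N - j), mul_zero, smul_zero]
            · by_cases h : r ≤ j
              · rw [if_pos h, if_pos h, if_pos (by omega : j - r ≤ N - r)]
                have e : N - r - (j - r) = N - j := by omega
                rw [e, ← MvPolynomial.smul_eq_C_mul, ← MvPolynomial.smul_eq_C_mul,
                  smul_smul, smul_smul]
              · rw [if_neg h, if_neg h, mul_zero, smul_zero]
          rw [Finset.sum_congr rfl hsplit, Finset.sum_add_distrib]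
          have hS1 : ∑ r ∈ Finset.Icc 1 N,
              (if r ≤ N - j then
                MvPolynomial.C (FkF t u j) * ((1 - t ^ r) • (MvPolynomial.X r * cPoly' t (N - j - r)))
              else 0)
              = MvPolynomial.C (FkF t u j) * (((N - j : ℕ) : K) • cPoly' t (N - j)) := by
            rw [newton, Finset.mul_sum]
            rw [← Finset.sum_subset (Finset.Icc_subset_Icc_right (by omega : N - j ≤ N))]
            · apply Finset.sum_congr rfl
              intro r hr
              rw [if_pos (Finset.mem_Icc.mp hr).2]
            · intro r hr hnr
              rw [if_neg]
              intro hcon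
              exact hnr (Finset.mem_Icc.mpr ⟨(Finset.mem_Icc.mp hr).1, hcon⟩)
          have hS2 : ∑ r ∈ Finset.Icc 1 N,
              (if r ≤ j then ((1 - t ^ r) * (u ^ r - 1) * FkF t u (j - r)) • cPoly' t (N - j) else 0)
              = ((j : ℕ) : K) • (MvPolynomial.C (FkF t u j) * cPoly' t (N - j)) := by
            rw [← Finset.sum_subset (Finset.Icc_subset_Icc_right hjN)]
            · rw [Finset.sum_congr rfl (fun r hr => if_pos (Finset.mem_Icc.mp hr).2)]
              rw [← Finset.sum_smul, ← scalar_id]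
              rw [MvPolynomial.smul_eq_C_mul, MvPolynomial.smul_eq_C_mul, map_mul]
              ring
            · intro r hr hnr
              rw [if_neg]
              intro hcon
              exact hnr (Finset.mem_Icc.mpr ⟨(Finset.mem_Icc.mp hr).1, hcon⟩)
          rw [hS1, hS2, mul_smul_comm, ← add_smul]
          congr 1
          rw [← Nat.cast_add]
          congr 1
          omega
        · rw [if_neg hjN, smul_zero]
          apply Finset.sum_eq_zero
          intro r hr
          obtain ⟨hr1, hr2⟩ := Finset.mem_Icc.mp hr
          rw [if_neg (by omega : ¬ j ≤ N - r)]
          rcases le_or_gt r j with h | h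
          · rw [if_pos h, if_neg (by omega : ¬ j - r ≤ N - r)]
            simp
          · rw [if_neg (by omega : ¬ r ≤ j)]
            simp
      have := congrArg (fun x => (((N : ℕ) : K))⁻¹ • x) goal2
      simpa [smul_smul, inv_mul_cancel₀ hNne] using this


end

/-- the two-variable generating function identity
`[exp(∑_n b_n z^{-n}), exp(∑_m a_m w^m)]
  = ((1-t)(q⁻¹-1)(w/z))/((1-t(w/z))(1-q⁻¹(w/z))) · exp(∑_m a_m w^m) exp(∑_n b_n z^{-n})`,
with `a_m = (1-t^m)p_m/m` and `b_n = (q^{-n}-1)∂_{p_n}`, stated coefficientwise: extracting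
the coefficient of `z^{-k} w^ℓ` and expanding the prefactor as
`∑_{j≥1} (1-t)(q⁻¹-1)[[j]]_{(t,q⁻¹)} (w/z)^j` (note `exp(∑ a_m w^m) = ∑_ℓ c_ℓ w^ℓ` and
`exp(∑ b_n z^{-n}) = ∑_k \widetilde{c}_k z^{-k}`, which vanish for negative index,
whence `j ≤ min k ℓ`). -/
theorem exp_commutator_genFunc {K : Type} [Field K] [CharZero K] (q t : K) (hq : q ≠ 0)
    (k ℓ : ℕ) (g : MvPolynomial ℕ K) :
    ctOp (bq q) k (cPoly t ℓ * g) - cPoly t ℓ * ctOp (bq q) k g =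
      ∑ j ∈ Finset.Icc 1 (min k ℓ),
        MvPolynomial.C ((1 - t) * (q⁻¹ - 1) * qtInt t q⁻¹ j) *
          (cPoly t (ℓ - j) * ctOp (bq q) (k - j) g) := by

  classical
  have ec : ∀ (a : K) (n : ℕ), cPoly a n = cPoly' a n := fun a n => by
    rw [cPoly', expPS, PowerSeries.coeff_mk]
    rfl
  have eq1 : ∀ h : MvPolynomial ℕ K,
      subShift (bq q) h = shiftHom (fun n => q⁻¹ ^ n - 1) h := fun _ => rfl
  have eqt : ∀ n, qtInt t q⁻¹ n = qtInt' t q⁻¹ n := fun _ => rfl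
  set b' : ℕ → K := fun n => q⁻¹ ^ n - 1 with hb'
  set T : Polynomial (MvPolynomial ℕ K) := shiftHom b' g with hT
  have hctg : ∀ a : ℕ, ctOp (bq q) a g = T.coeff a := fun a =>
    congrArg (fun p : Polynomial (MvPolynomial ℕ K) => p.coeff a) (eq1 g)
  have key := KL q⁻¹ t ℓ
  have hmul : ctOp (bq q) k (cPoly t ℓ * g)
      = ∑ a ∈ Finset.range (k + 1),
          (shiftHom b' (cPoly' t ℓ)).coeff a * T.coeff (k - a) := by
    have h0 : ctOp (bq q) k (cPoly t ℓ * g)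
        = (shiftHom b' (cPoly' t ℓ * g)).coeff k := by
      rw [ctOp, ec t ℓ, eq1]
    rw [h0, map_mul, Polynomial.coeff_mul, Finset.Nat.sum_antidiagonal_eq_sum_range_succ_mk]
  rw [hmul, Finset.sum_range_succ']
  rw [Finset.sum_congr rfl (fun i (_ : i ∈ Finset.range k) => by rw [key (i + 1)])]
  rw [key 0, if_pos (Nat.zero_le ℓ)]
  have hF0 : FkF t q⁻¹ 0 = 1 := rfl
  rw [hF0, map_one, one_mul, Nat.sub_zero, Nat.sub_zero]
  rw [hctg k, ec t ℓ]
  rw [add_sub_assoc, sub_self, add_zero]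
  have hIcc : ∑ j ∈ Finset.Icc 1 k,
      (if j ≤ ℓ then MvPolynomial.C (FkF t q⁻¹ j) * cPoly' t (ℓ - j) else 0) * T.coeff (k - j)
      = ∑ i ∈ Finset.range k,
        (if i + 1 ≤ ℓ then MvPolynomial.C (FkF t q⁻¹ (i + 1)) * cPoly' t (ℓ - (i + 1)) else 0)
          * T.coeff (k - (i + 1)) := by
    rw [← Finset.Ico_add_one_right_eq_Icc, Finset.sum_Ico_eq_sum_range]
    have h2 : k + 1 - 1 = k := by omega
    rw [h2]
    apply Finset.sum_congr rfl
    intro i _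
    rw [add_comm 1 i]
  rw [← hIcc]
  rw [← Finset.sum_subset (Finset.Icc_subset_Icc_right (min_le_left k ℓ))]
  · apply Finset.sum_congr rfl
    intro j hj
    obtain ⟨hj1, hj2⟩ := Finset.mem_Icc.mp hj
    rw [if_pos (by omega : j ≤ ℓ)]
    have hFj : FkF t q⁻¹ j = (1 - t) * (q⁻¹ - 1) * qtInt t q⁻¹ j := by
      rw [FkF, if_neg (by omega : j ≠ 0), eqt]
    rw [hFj, ec t (ℓ - j), hctg (k - j), mul_assoc]
  · intro j hj hnj
    obtain ⟨hj1, hj2⟩ := Finset.mem_Icc.mp hj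
    have hnl : ¬ j ≤ ℓ := by
      intro hc
      exact hnj (Finset.mem_Icc.mpr ⟨hj1, by omega⟩)
    rw [if_neg hnl, zero_mul]
end

section
/- The level-$\frac32$ super Macdonald polynomial $\mathcal{M}_{(3/2)} = \frac{q(1-t)}{1-qt}p_1\pi_1 + \frac{1-q}{1-qt}\pi_2$ is a simultaneous eigenvector of the operator $\mathcal{D}_2 := (q^{-1}-1)p_1\partial_{p_1} + (q^{-1}-1)\pi_1\partial_{\pi_1} + (q^{-1}-1)^2 \partial_{p_1}\pi_2\partial_{\pi_1} + (1-t)(q^{-1}-1)p_1\pi_1\partial_{\pi_2} + \tfrac12\big((1+t)(q^{-2}-1)+(1-t)(q^{-1}-1)^2\big)\pi_2\partial_{\pi_2}$ with eigenvalue $q^{-2}-1$. -/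
noncomputable section

variable {K : Type} [Field K] [CharZero K]

/-- The super-polynomial ring `K[p₁,p₂,…] ⊗ Λ[π₁,π₂,…]`, modelled by finitely supported
functions assigning to each finite set `T` of fermionic indices (the wedge monomial
`π_{t₁} ∧ ⋯ ∧ π_{t_m}`, indices increasing) a bosonic coefficient. -/
abbrev SP (K : Type) [Field K] := Finset ℕ →₀ MvPolynomial ℕ K

/-- Multiplication by a bosonic element `f`, acting coefficientwise. -/
def fmul (f : MvPolynomial ℕ K) (v : SP K) : SP K :=
  v.sum fun T r => Finsupp.single T (f * r)

/-- A bosonic operator `A` (e.g. a differential operator in the `p`'s) acting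
coefficientwise. -/
def fop (A : MvPolynomial ℕ K → MvPolynomial ℕ K) (v : SP K) : SP K :=
  v.sum fun T r => Finsupp.single T (A r)

/-- Left multiplication by the fermionic generator `π_k`:
`π_k · e_T = (-1)^{#{s∈T : s<k}} e_{T∪{k}}` for `k ∉ T`, and `0` otherwise. -/
def fermi (k : ℕ) (v : SP K) : SP K :=
  v.sum fun T r =>
    if k ∈ T then 0
    else Finsupp.single (insert k T)
      ((-1 : MvPolynomial ℕ K) ^ ((T.filter fun j => j < k).card) * r)

/-- The odd derivation `∂_{π_k}` with `{∂_{π_k}, π_ℓ} = δ_{kℓ}`: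
`∂_{π_k} e_T = (-1)^{#{s∈T : s<k}} e_{T\{k}}` for `k ∈ T`, and `0` otherwise. -/
def dfermi (k : ℕ) (v : SP K) : SP K :=
  v.sum fun T r =>
    if k ∈ T then
      Finsupp.single (T.erase k)
        ((-1 : MvPolynomial ℕ K) ^ ((T.filter fun j => j < k).card) * r)
    else 0

end

noncomputable section

open MvPolynomial

variable {K : Type} [Field K] [CharZero K]

/-- The level-`3/2` super Macdonald polynomial
`𝓜_{(3/2)} = q(1-t)/(1-qt) · p₁π₁ + (1-q)/(1-qt) · π₂`. -/
def M32 (q t : K) : SP K :=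
  Finsupp.single {1} (C (q * (1 - t) / (1 - q * t)) * X 1) +
    Finsupp.single {2} (C ((1 - q) / (1 - q * t)))

/-- The operator `𝒟₂ = (q⁻¹-1) p₁∂_{p₁} + (q⁻¹-1) π₁∂_{π₁} + (q⁻¹-1)² ∂_{p₁} π₂ ∂_{π₁}
+ (1-t)(q⁻¹-1) p₁ π₁ ∂_{π₂} + ½((1+t)(q⁻²-1)+(1-t)(q⁻¹-1)²) π₂ ∂_{π₂}`. -/
def D2op (q t : K) (v : SP K) : SP K :=
  fmul (C (q⁻¹ - 1) * X 1) (fop (pderiv 1) v) +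
    fmul (C (q⁻¹ - 1)) (fermi 1 (dfermi 1 v)) +
    fmul (C ((q⁻¹ - 1) ^ 2)) (fop (pderiv 1) (fermi 2 (dfermi 1 v))) +
    fmul (C ((1 - t) * (q⁻¹ - 1)) * X 1) (fermi 1 (dfermi 2 v)) +
    fmul (C (((1 + t) * ((q⁻¹) ^ 2 - 1) + (1 - t) * (q⁻¹ - 1) ^ 2) / 2))
      (fermi 2 (dfermi 2 v))

lemma fmul_single (f : MvPolynomial ℕ K) (T : Finset ℕ) (r : MvPolynomial ℕ K) :
    fmul f (Finsupp.single T r) = Finsupp.single T (f * r) := by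
  rw [fmul, Finsupp.sum_single_index] <;> simp

lemma fop_single (A : MvPolynomial ℕ K → MvPolynomial ℕ K) (h : A 0 = 0)
    (T : Finset ℕ) (r : MvPolynomial ℕ K) :
    fop A (Finsupp.single T r) = Finsupp.single T (A r) := by
  rw [fop, Finsupp.sum_single_index] <;> simp [h]

lemma fermi_single (k : ℕ) (T : Finset ℕ) (r : MvPolynomial ℕ K) :
    fermi k (Finsupp.single T r) = if k ∈ T then 0
    else Finsupp.single (insert k T)
      ((-1 : MvPolynomial ℕ K) ^ ((T.filter fun j => j < k).card) * r) := by
  rw [fermi, Finsupp.sum_single_index]; split <;> simp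

lemma dfermi_single (k : ℕ) (T : Finset ℕ) (r : MvPolynomial ℕ K) :
    dfermi k (Finsupp.single T r) = if k ∈ T then
      Finsupp.single (T.erase k)
        ((-1 : MvPolynomial ℕ K) ^ ((T.filter fun j => j < k).card) * r)
    else 0 := by
  rw [dfermi, Finsupp.sum_single_index]; split <;> simp

lemma fmul_add (f : MvPolynomial ℕ K) (u v : SP K) :
    fmul f (u + v) = fmul f u + fmul f v := by
  rw [fmul, Finsupp.sum_add_index] <;> simp [mul_add, Finsupp.single_add, fmul]

lemma fop_add (A : MvPolynomial ℕ K → MvPolynomial ℕ K) (h0 : A 0 = 0)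
    (hA : ∀ a b, A (a+b) = A a + A b) (u v : SP K) :
    fop A (u + v) = fop A u + fop A v := by
  rw [fop, Finsupp.sum_add_index] <;> simp [h0, hA, Finsupp.single_add, fop]

lemma fermi_add (k : ℕ) (u v : SP K) :
    fermi k (u + v) = fermi k u + fermi k v := by
  rw [fermi, Finsupp.sum_add_index]
  · rfl
  · intro a _; split <;> simp
  · intro a _ b c; split <;> simp [mul_add, Finsupp.single_add]

lemma dfermi_add (k : ℕ) (u v : SP K) :
    dfermi k (u + v) = dfermi k u + dfermi k v := by
  rw [dfermi, Finsupp.sum_add_index]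
  · rfl
  · intro a _; split <;> simp
  · intro a _ b c; split <;> simp [mul_add, Finsupp.single_add]

lemma fmul_zero' (f : MvPolynomial ℕ K) : fmul f (0 : SP K) = 0 := by simp [fmul]
lemma fop_zero' (A : MvPolynomial ℕ K → MvPolynomial ℕ K) : fop A (0 : SP K) = 0 := by simp [fop]
lemma fermi_zero' (k : ℕ) : fermi k (0 : SP K) = 0 := by simp [fermi]
lemma dfermi_zero' (k : ℕ) : dfermi k (0 : SP K) = 0 := by simp [dfermi]

/-- `𝓜_{(3/2)}` is an eigenvector of `𝒟₂` with eigenvalue `q⁻² - 1`. -/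
theorem D2_eigen_M32 (q t : K) (hq : q ≠ 0) (hqt : q * t ≠ 1) :
    D2op q t (M32 q t) = fmul (C ((q⁻¹ : K) ^ 2 - 1)) (M32 q t) := by
  simp only [D2op, M32, fmul_add, fermi_add, dfermi_add,
    fop_add _ (map_zero _) (map_add _),
    fmul_single, fop_single _ (map_zero _), fermi_single, dfermi_single,
    fmul_zero', fop_zero', fermi_zero', dfermi_zero',
    Finset.mem_singleton, Finset.mem_insert, Finset.filter_singleton,
    Finset.erase_singleton, Finset.filter_empty, Finset.notMem_empty,
    if_true, if_false]
  simp (config := { decide := true }) only [fmul_zero', fop_zero', fermi_zero',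
    insert_empty_eq, pderiv_C_mul, pderiv_X_self, pderiv_C, if_true, if_false,
    Finset.card_empty, pow_zero, one_mul, mul_one, smul_eq_mul]
  have h0 : (1 : K) - q * t ≠ 0 := sub_ne_zero.mpr (Ne.symm hqt)
  have h1K : (q⁻¹ - 1) * (q * (1 - t) / (1 - q * t)) + (q⁻¹ - 1) * (q * (1 - t) / (1 - q * t))
      + (1 - t) * (q⁻¹ - 1) * ((1 - q) / (1 - q * t))
      = (q⁻¹ ^ 2 - 1) * (q * (1 - t) / (1 - q * t)) := by
    field_simp
    ring
  have h2K : (q⁻¹ - 1) ^ 2 * (q * (1 - t) / (1 - q * t))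
      + ((1 + t) * (q⁻¹ ^ 2 - 1) + (1 - t) * (q⁻¹ - 1) ^ 2) / 2 * ((1 - q) / (1 - q * t))
      = (q⁻¹ ^ 2 - 1) * ((1 - q) / (1 - q * t)) := by
    have hd : q ^ 4 * 2 - q ^ 5 * t * 4 + q ^ 6 * t ^ 2 * 2 ≠ 0 := by
      have e : q ^ 4 * 2 - q ^ 5 * t * 4 + q ^ 6 * t ^ 2 * 2 = 2 * q ^ 4 * (1 - q * t) ^ 2 := by
        ring
      rw [e]
      exact mul_ne_zero (mul_ne_zero two_ne_zero (pow_ne_zero _ hq)) (pow_ne_zero _ h0)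
    field_simp
    ring
  have hC1 := congrArg (fun x : K => (C x : MvPolynomial ℕ K)) h1K
  have hC2 := congrArg (fun x : K => (C x : MvPolynomial ℕ K)) h2K
  simp only [map_add, map_mul, map_sub, map_one, map_pow] at hC1 hC2
  refine Finsupp.ext fun S => ?_
  simp only [Finsupp.add_apply, Finsupp.single_apply, Finsupp.coe_zero, Pi.zero_apply,
    mul_zero, add_zero, zero_add, map_mul, map_sub, map_one, map_pow]
  split_ifs with ha hb hb
  · rw [← ha] at hb; exact absurd hb (by decide)
  · linear_combination (X 1 : MvPolynomial ℕ K) * hC1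
  · linear_combination hC2
  · ring

end
end
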